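/- Let d > 1 and let f : {0,1}^{ℤ^d} → {0,1} be a standard transition function such that the all-ones configuration attracts D_f. Assume there exists a direction p such that D_f has velocities V_p and V_{−p} in directions p and −p with V_p + V_{−p} > 0. Then for every ε ∈ (0,1] there is a constant c > 0 such that every probability measure μ invariant for N_ε D_f satisfies μ(1_{S_{0,L}}) ≥ exp(−c·(L^{d−1} + 1)) for every integer L ≥ 0. -/

import Mathlib

open MeasureTheory ENNReal

namespace CAPaper

/-- Sites of the lattice `ℤ^d`. -/
abbrev Site (d : ℕ) := Fin d → ℤ

/-- Configurations `{0,1}^{ℤ^d}`, values in `Bool` (`false` = 0, `true` = 1). -/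
abbrev Config (d : ℕ) := Site d → Bool

/-- Euclidean norm on `ℝ^d`. -/
noncomputable def enorm {d : ℕ} (v : Fin d → ℝ) : ℝ := Real.sqrt (∑ k, v k ^ 2)

/-- Euclidean scalar product on `ℝ^d`. -/
noncomputable def edot {d : ℕ} (u v : Fin d → ℝ) : ℝ := ∑ k, u k * v k

/-- The embedding `ℤ^d → ℝ^d`. -/
def embed {d : ℕ} (i : Site d) : Fin d → ℝ := fun k => (i k : ℝ)

/-- Euclidean norm of a lattice point. -/
noncomputable def enormZ {d : ℕ} (i : Site d) : ℝ := enorm (embed i)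

open Classical in
/-- `Conf S` is the configuration whose indicator is `S`. -/
noncomputable def Conf {d : ℕ} (S : Set (Site d)) : Config d :=
  fun i => if i ∈ S then true else false

/-- `f` is local with support `Δ`. -/
def IsLocal {d : ℕ} (f : Config d → Bool) (Δ : Finset (Site d)) : Prop :=
  ∀ x y : Config d, (∀ i ∈ Δ, x i = y i) → f x = f y

/-- `f` is monotonic. -/
def Monotonic {d : ℕ} (f : Config d → Bool) : Prop :=
  ∀ x y : Config d, (∀ i, x i ≤ y i) → f x ≤ f y

/-- `f` is a standard transition function with support `Δ`. -/
def Standard {d : ℕ} (f : Config d → Bool) (Δ : Finset (Site d)) : Prop :=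
  IsLocal f Δ ∧ Monotonic f ∧ ∃ x y : Config d, f x ≠ f y

/-- The deterministic cellular automaton `D_f`. -/
def Df {d : ℕ} (f : Config d → Bool) (x : Config d) : Config d :=
  fun i => f (fun j => x (i + j))

/-- The invariant configuration `x` attracts `D`. -/
def Attracts {d : ℕ} (D : Config d → Config d) (x : Config d) : Prop :=
  D x = x ∧ ∀ y : Config d, {i | y i ≠ x i}.Finite → ∃ t : ℕ, D^[t] y = x

/-- `D_f` has velocity `V` in the direction `p`. -/
def HasVelocity {d : ℕ} (f : Config d → Bool) (p : Fin d → ℝ) (V : ℝ) : Prop :=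
  ∀ C : ℝ, Df f (Conf {i | edot (embed i) p ≤ C}) = Conf {i | edot (embed i) p ≤ C + V}

/-- Probability that, after the one-sided noise with parameter `ε` is applied to a
configuration whose value at a given site is `xi`, that site carries the value `b`. -/
noncomputable def noiseProb (ε : ℝ) (xi b : Bool) : ℝ≥0∞ :=
  if xi then (if b then 1 else 0)
  else (if b then ENNReal.ofReal ε else ENNReal.ofReal (1 - ε))

/-- `ν` is the result of one step of the stochastic automaton `N_ε D` applied to `μ`
(first apply `D`, then independent one-sided noise at every site); since the noise measure
is a product measure, this is equivalent to specifying all cylinder probabilities of `ν`. -/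
def IsStep {ι : Type*} (ε : ℝ) (D : (ι → Bool) → (ι → Bool)) (μ ν : Measure (ι → Bool)) : Prop :=
  ∀ (Λ : Finset ι) (b : ι → Bool),
    ν {y | ∀ i ∈ Λ, y i = b i} = ∫⁻ x, ∏ i ∈ Λ, noiseProb ε (D x i) (b i) ∂μ

/-- `μ` is invariant for the stochastic automaton `N_ε D`. -/
def Invariant {ι : Type*} (ε : ℝ) (D : (ι → Bool) → (ι → Bool)) (μ : Measure (ι → Bool)) : Prop :=
  IsStep ε D μ μ

/-- The cylinder event: all sites of `Λ` carry the value 1. -/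
def ones {ι : Type*} (Λ : Set ι) : Set (ι → Bool) := {x | ∀ i ∈ Λ, x i = true}


lemma edot_embed_add {d : ℕ} (p : Fin d → ℝ) (i j : Site d) :
    edot (embed (i + j)) p = edot (embed i) p + edot (embed j) p := by
  unfold edot embed
  rw [← Finset.sum_add_distrib]
  refine Finset.sum_congr rfl fun k _ => ?_
  have : ((i + j) k : ℝ) = (i k : ℝ) + (j k : ℝ) := by push_cast [Pi.add_apply]; ring
  rw [this]; ring

lemma edot_neg_right {d : ℕ} (u p : Fin d → ℝ) : edot u (-p) = - edot u p := by
  unfold edot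
  rw [← Finset.sum_neg_distrib]
  exact Finset.sum_congr rfl fun k _ => by simp [mul_neg]

/-- slab set -/
def Slab {d : ℕ} (p : Fin d → ℝ) (a b : ℝ) : Set (Site d) :=
  {i | a ≤ edot (embed i) p ∧ edot (embed i) p ≤ b}

/-- truncated slab -/
def Trunc {d : ℕ} (p : Fin d → ℝ) (a b R : ℝ) : Set (Site d) :=
  {i | (a ≤ edot (embed i) p ∧ edot (embed i) p ≤ b) ∧ ∀ k, |(i k : ℝ)| ≤ R}

section SlabStep
variable {d : ℕ} {f : Config d → Bool} {Δ : Finset (Site d)}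
  (hloc : IsLocal f Δ) {p : Fin d → ℝ} {V V' : ℝ}
  (hVp : HasVelocity f p V) (hVp' : HasVelocity f (-p) V')
  {rp : ℝ} (hrp : ∀ j ∈ Δ, |edot (embed j) p| ≤ rp)

include hloc hVp hVp' hrp in
lemma slab_step {a b : ℝ} (hw : a + rp ≤ b - rp) (i : Site d)
    (h1 : a - V' ≤ edot (embed i) p) (h2 : edot (embed i) p ≤ b + V) :
    Df f (Conf (Slab p a b)) i = true := by
  set c := edot (embed i) p with hc
  by_cases hca : a + rp ≤ c
  · -- agree with half-space ≤ b on the neighbourhood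
    have hagree : ∀ j ∈ Δ, Conf (Slab p a b) (i + j)
        = Conf {w : Site d | edot (embed w) p ≤ b} (i + j) := by
      intro j hj
      have hij : edot (embed (i + j)) p = c + edot (embed j) p := edot_embed_add p i j
      have hja := (abs_le.mp (hrp j hj)).1
      have ha : a ≤ edot (embed (i + j)) p := by rw [hij]; linarith
      by_cases hb : edot (embed (i + j)) p ≤ b
      · simp [Conf, Slab, ha, hb]
      · simp [Conf, Slab, hb]
    have heq : Df f (Conf (Slab p a b)) i
        = Df f (Conf {w : Site d | edot (embed w) p ≤ b}) i :=
      hloc _ _ fun j hj => hagree j hj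
    rw [heq, hVp b]
    simp only [Conf, Set.mem_setOf_eq]
    rw [if_pos]; linarith
  · push_neg at hca
    have hcb : c ≤ b - rp := le_trans hca.le hw
    have hagree : ∀ j ∈ Δ, Conf (Slab p a b) (i + j)
        = Conf {w : Site d | edot (embed w) (-p) ≤ -a} (i + j) := by
      intro j hj
      have hij : edot (embed (i + j)) p = c + edot (embed j) p := edot_embed_add p i j
      have hja := (abs_le.mp (hrp j hj)).2
      have hb : edot (embed (i + j)) p ≤ b := by rw [hij]; linarith
      have hneg : edot (embed (i + j)) (-p) = - edot (embed (i + j)) p :=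
        edot_neg_right _ _
      by_cases ha : a ≤ edot (embed (i + j)) p
      · have : edot (embed (i + j)) (-p) ≤ -a := by rw [hneg]; linarith
        simp [Conf, Slab, ha, hb, this]
      · have : ¬ edot (embed (i + j)) (-p) ≤ -a := by rw [hneg]; push_neg at ha ⊢; linarith
        simp [Conf, Slab, ha, this]
    have heq : Df f (Conf (Slab p a b)) i
        = Df f (Conf {w : Site d | edot (embed w) (-p) ≤ -a}) i :=
      hloc _ _ fun j hj => hagree j hj
    rw [heq, hVp' (-a)]
    simp only [Conf, Set.mem_setOf_eq]
    rw [if_pos]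
    rw [edot_neg_right]; linarith

variable {rb : ℝ} (hrb : ∀ j ∈ Δ, ∀ k, |((j k : ℤ) : ℝ)| ≤ rb)

include hloc hVp hVp' hrp hrb in
lemma trunc_step {a b : ℝ} (hw : a + rp ≤ b - rp) (R' : ℝ) (i : Site d)
    (hi : i ∈ Trunc p (a - V') (b + V) R') :
    Df f (Conf (Trunc p a b (R' + rb))) i = true := by
  have hagree : ∀ j ∈ Δ, Conf (Trunc p a b (R' + rb)) (i + j)
      = Conf (Slab p a b) (i + j) := by
    intro j hj
    have hbox : ∀ k, |(((i + j) k : ℤ) : ℝ)| ≤ R' + rb := by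
      intro k
      have h1 := hi.2 k
      have h2 := hrb j hj k
      have h3 : (((i + j) k : ℤ) : ℝ) = (i k : ℝ) + (j k : ℝ) := by
        push_cast [Pi.add_apply]; ring
      calc |(((i + j) k : ℤ) : ℝ)| = |(i k : ℝ) + (j k : ℝ)| := by rw [h3]
        _ ≤ |(i k : ℝ)| + |(j k : ℝ)| := abs_add_le _ _
        _ ≤ R' + rb := add_le_add h1 h2
    have hiff : (i + j) ∈ Trunc p a b (R' + rb) ↔ (i + j) ∈ Slab p a b :=
      ⟨fun h => h.1, fun h => ⟨h, hbox⟩⟩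
    by_cases h : (i + j) ∈ Slab p a b
    · simp only [Conf, if_pos (hiff.mpr h), if_pos h]
    · simp only [Conf, if_neg (fun hh => h (hiff.mp hh)), if_neg h]
  have heq : Df f (Conf (Trunc p a b (R' + rb))) i = Df f (Conf (Slab p a b)) i :=
    hloc _ _ fun j hj => hagree j hj
  rw [heq]
  exact slab_step hloc hVp hVp' hrp hw i hi.1.1 hi.1.2

end SlabStep

lemma trunc_finite {d : ℕ} (p : Fin d → ℝ) (a b R : ℝ) : (Trunc p a b R).Finite := by
  have hsub : Trunc p a b R ⊆ Set.pi Set.univ (fun k : Fin d => (Set.Icc (-⌈R⌉) ⌈R⌉ : Set ℤ)) := by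
    intro i hi
    intro k _
    have h := hi.2 k
    have h1 := (abs_le.mp h).1
    have h2 := (abs_le.mp h).2
    constructor
    · have : (i k : ℝ) ≥ -⌈R⌉ := le_trans (by exact_mod_cast neg_le_neg (Int.le_ceil R)) h1
      exact_mod_cast this
    · have : (i k : ℝ) ≤ ⌈R⌉ := le_trans h2 (Int.le_ceil R)
      exact_mod_cast this
  exact Set.Finite.subset (Set.Finite.pi fun k => Set.finite_Icc _ _) hsub

lemma measurableSet_ones {d : ℕ} (S : Set (Site d)) : MeasurableSet (ones S) := by
  have h : ones S = ⋂ i ∈ S, {x : Config d | x i = true} := by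
    ext x; simp [ones]
  rw [h]
  refine MeasurableSet.biInter (Set.to_countable S) (fun i _ => ?_)
  have : {x : Config d | x i = true} = (fun x : Config d => x i) ⁻¹' {true} := rfl
  rw [this]
  exact measurable_pi_apply i (measurableSet_singleton true)

lemma ones_antitone {d : ℕ} {S T : Set (Site d)} (h : S ⊆ T) : ones T ⊆ ones S :=
  fun x hx i hi => hx i (h hi)

lemma conf_le_of_mem_ones {d : ℕ} {S : Set (Site d)} {x : Config d} (hx : x ∈ ones S) :
    ∀ i, Conf S i ≤ x i := by
  intro i
  unfold Conf
  by_cases h : i ∈ S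
  · rw [if_pos h, hx i h]
  · rw [if_neg h]; exact Bool.false_le _

lemma noiseProb_true_ge {ε : ℝ} (hε1 : ε ≤ 1) (b : Bool) :
    ENNReal.ofReal ε ≤ noiseProb ε b true := by
  cases b
  · simp [noiseProb]
  · simp [noiseProb, ENNReal.ofReal_le_one, hε1]

lemma base_bound {d : ℕ} (f : Config d → Bool) {ε : ℝ} (hε1 : ε ≤ 1)
    (μ : Measure (Config d)) [IsProbabilityMeasure μ] (hinv : Invariant ε (Df f) μ)
    (S : Set (Site d)) (hS : S.Finite) :
    ENNReal.ofReal ε ^ hS.toFinset.card ≤ μ (ones S) := by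
  have h := hinv hS.toFinset (fun _ => true)
  have hset : {y : Config d | ∀ i ∈ hS.toFinset, y i = (fun _ => true) i} = ones S := by
    ext x; simp [ones, Set.Finite.mem_toFinset]
  rw [hset] at h
  rw [h]
  calc ENNReal.ofReal ε ^ hS.toFinset.card
      = ∫⁻ _, ENNReal.ofReal ε ^ hS.toFinset.card ∂μ := by
        rw [lintegral_const, measure_univ, mul_one]
    _ ≤ ∫⁻ x, ∏ i ∈ hS.toFinset, noiseProb ε (Df f x i) ((fun _ => true) i) ∂μ := by
        refine lintegral_mono fun x => ?_
        rw [← Finset.prod_const]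
        exact Finset.prod_le_prod' fun i _ => noiseProb_true_ge hε1 _

lemma step_bound {d : ℕ} (f : Config d → Bool) (hm : Monotonic f) {ε : ℝ}
    (μ : Measure (Config d)) [IsProbabilityMeasure μ] (hinv : Invariant ε (Df f) μ)
    (S T : Set (Site d)) (hT : T.Finite) (h : ∀ i ∈ T, Df f (Conf S) i = true) :
    μ (ones S) ≤ μ (ones T) := by
  have hi := hinv hT.toFinset (fun _ => true)
  have hset : {y : Config d | ∀ i ∈ hT.toFinset, y i = (fun _ => true) i} = ones T := by
    ext x; simp [ones, Set.Finite.mem_toFinset]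
  rw [hset] at hi
  rw [hi]
  have hpt : ∀ x : Config d, (ones S).indicator (1 : Config d → ℝ≥0∞) x
      ≤ ∏ i ∈ hT.toFinset, noiseProb ε (Df f x i) ((fun _ => true) i) := by
    intro x
    by_cases hx : x ∈ ones S
    · rw [Set.indicator_of_mem hx]
      have hone : ∀ i ∈ hT.toFinset, noiseProb ε (Df f x i) true = 1 := by
        intro i hi'
        have h1 : Df f (Conf S) i ≤ Df f x i := hm _ _ (fun j => conf_le_of_mem_ones hx _)
        rw [h i (hT.mem_toFinset.mp hi')] at h1
        have h2 : Df f x i = true := by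
          revert h1; cases (Df f x i) <;> simp
        rw [h2]; simp [noiseProb]
      rw [Finset.prod_eq_one hone]
      rfl
    · rw [Set.indicator_of_notMem hx]
      exact zero_le
  calc μ (ones S) = ∫⁻ x, (ones S).indicator 1 x ∂μ :=
        (lintegral_indicator_one (measurableSet_ones S)).symm
    _ ≤ _ := lintegral_mono hpt

lemma exists_big_coord {d : ℕ} (hd : 0 < d) {p : Fin d → ℝ} (hp : ∑ k, p k ^ 2 = 1) :
    ∃ k0 : Fin d, 1 / (d : ℝ) ≤ |p k0| := by
  have hne : (Finset.univ : Finset (Fin d)).Nonempty := ⟨⟨0, hd⟩, Finset.mem_univ _⟩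
  have hsq : ∃ k0, 1 / (d : ℝ) ≤ p k0 ^ 2 := by
    by_contra h
    push_neg at h
    have := Finset.sum_lt_sum_of_nonempty (f := fun k => p k ^ 2) (g := fun _ => 1/(d:ℝ)) hne (fun k _ => h k)
    rw [hp, Finset.sum_const, Finset.card_univ, Fintype.card_fin] at this
    have hd' : (0 : ℝ) < d := by exact_mod_cast hd
    rw [nsmul_eq_mul, mul_one_div, div_self (ne_of_gt hd')] at this
    exact lt_irrefl _ this
  obtain ⟨k0, hk0⟩ := hsq
  refine ⟨k0, ?_⟩
  have hple : p k0 ^ 2 ≤ 1 := by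
    rw [← hp]
    exact Finset.single_le_sum (f := fun k => p k ^ 2) (fun k _ => sq_nonneg _) (Finset.mem_univ k0)
  have hA0 : (0:ℝ) ≤ |p k0| := abs_nonneg _
  have hsqA : |p k0| ^ 2 = p k0 ^ 2 := sq_abs _
  nlinarith

open Finset in
lemma card_trunc_le {d : ℕ} (hd : 0 < d) {p : Fin d → ℝ} (hp : ∑ k, p k ^ 2 = 1)
    (a b R : ℝ) (hab : a ≤ b) (hR : 0 ≤ R) :
    ((trunc_finite p a b R).toFinset.card : ℝ)
      ≤ (2 * ((b - a) * d) + 3) * (2 * R + 3) ^ (d - 1) := by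
  classical
  obtain ⟨k0, hk0⟩ := exists_big_coord hd hp
  set m : ℤ := ⌈(b - a) * d⌉ with hm
  set B : ℤ := ⌈R⌉ with hB
  set n : ℕ := (2 * m + 1).toNat with hn
  set Q : ℕ := (2 * B + 1).toNat with hQ
  set s : Finset (Site d) := (trunc_finite p a b R).toFinset with hs
  have hmem : ∀ i, i ∈ s ↔ i ∈ Trunc p a b R := fun i => Set.Finite.mem_toFinset _
  set g : Site d → Site d := fun i => Function.update i k0 0 with hg
  have hd' : (0:ℝ) < d := by exact_mod_cast hd
  -- fiber bound
  have hfib : ∀ w ∈ s.image g, (s.filter (fun i => g i = w)).card ≤ n := by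
    intro w hw
    obtain ⟨y, hy, hgy⟩ := Finset.mem_image.mp hw
    have hcard : (Finset.Icc (y k0 - m) (y k0 + m)).card = n := by
      rw [Int.card_Icc]
      congr 1
      omega
    rw [← hcard]
    refine Finset.card_le_card_of_injOn (fun i => i k0) ?_ ?_
    · intro i hi
      rw [Finset.mem_coe, Finset.mem_filter] at hi
      obtain ⟨his, hgi⟩ := hi
      have hoff : ∀ k, k ≠ k0 → i k = y k := by
        intro k hk
        have h1 : g i k = g y k := by rw [hgi, hgy]
        simpa [hg, Function.update_of_ne hk] using h1
      have hsplit : edot (embed i) p - edot (embed y) p = ((i k0 : ℝ) - (y k0 : ℝ)) * p k0 := by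
        unfold edot embed
        rw [← Finset.sum_sub_distrib]
        rw [Finset.sum_eq_single k0]
        · ring
        · intro k _ hk
          rw [hoff k hk]; ring
        · intro h; exact absurd (Finset.mem_univ k0) h
      have hiT := (hmem i).mp his
      have hyT := (hmem y).mp hy
      have hd1 : |edot (embed i) p - edot (embed y) p| ≤ b - a := by
        rw [abs_le]
        constructor <;> [linarith [hiT.1.1, hiT.1.2, hyT.1.1, hyT.1.2]; linarith [hiT.1.1, hiT.1.2, hyT.1.1, hyT.1.2]]
      have hd2 : |(i k0 : ℝ) - (y k0 : ℝ)| * |p k0| ≤ b - a := by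
        rw [← abs_mul, ← hsplit]; exact hd1
      have hd3 : |(i k0 : ℝ) - (y k0 : ℝ)| ≤ (b - a) * d := by
        have hpk : (0:ℝ) < |p k0| := lt_of_lt_of_le (by positivity) hk0
        have h1 : |(i k0 : ℝ) - (y k0 : ℝ)| * (1 / d) ≤ |(i k0 : ℝ) - (y k0 : ℝ)| * |p k0| :=
          mul_le_mul_of_nonneg_left hk0 (abs_nonneg _)
        have h2 : |(i k0 : ℝ) - (y k0 : ℝ)| * (1 / d) ≤ b - a := le_trans h1 hd2
        calc |(i k0 : ℝ) - (y k0 : ℝ)| = (|(i k0 : ℝ) - (y k0 : ℝ)| * (1 / d)) * d := by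
              field_simp
          _ ≤ (b - a) * d := mul_le_mul_of_nonneg_right h2 hd'.le
      have hd4 : |(i k0 : ℝ) - (y k0 : ℝ)| ≤ (m : ℝ) := le_trans hd3 (Int.le_ceil _)
      have hd5 : |i k0 - y k0| ≤ m := by
        have : ((|i k0 - y k0| : ℤ) : ℝ) ≤ (m : ℝ) := by
          rw [Int.cast_abs]; push_cast; push_cast at hd4; exact hd4
        exact_mod_cast this
      show i k0 ∈ Finset.Icc (y k0 - m) (y k0 + m)
      rw [Finset.mem_Icc]
      have := abs_le.mp hd5
      omega
    · intro i hi i' hi' hkk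
      simp only [Finset.coe_filter, Set.mem_setOf_eq] at hi hi'
      funext k
      by_cases hk : k = k0
      · rw [hk]; exact hkk
      · have h1 : g i k = g i' k := by rw [hi.2, hi'.2]
        simpa [hg, Function.update_of_ne hk] using h1
  have hcard1 : s.card ≤ n * (s.image g).card := Finset.card_le_mul_card_image s n hfib
  -- image bound
  have himg : (s.image g).card ≤ Q ^ (d - 1) := by
    have hsub : s.image g ⊆ Fintype.piFinset
        (fun k => if k = k0 then ({0} : Finset ℤ) else Finset.Icc (-B) B) := by
      intro w hw
      obtain ⟨y, hy, rfl⟩ := Finset.mem_image.mp hw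
      rw [Fintype.mem_piFinset]
      intro k
      by_cases hk : k = k0
      · rw [if_pos hk]
        subst hk
        simp [hg]
      · rw [if_neg hk]
        have hyT := (hmem y).mp hy
        have h1 := (abs_le.mp (hyT.2 k)).1
        have h2 := (abs_le.mp (hyT.2 k)).2
        have hb1 : -B ≤ y k := by
          have : ((-B : ℤ) : ℝ) ≤ (y k : ℝ) := le_trans (by push_cast; linarith [Int.le_ceil R]) h1
          exact_mod_cast this
        have hb2 : y k ≤ B := by
          have : (y k : ℝ) ≤ ((B : ℤ) : ℝ) := le_trans h2 (Int.le_ceil R)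
          exact_mod_cast this
        simp [hg, Function.update_of_ne hk, Finset.mem_Icc, hb1, hb2]
    calc (s.image g).card ≤ _ := Finset.card_le_card hsub
      _ = ∏ k, (if k = k0 then ({0} : Finset ℤ) else Finset.Icc (-B) B).card :=
          Fintype.card_piFinset _
      _ = Q ^ (d - 1) := by
          rw [← Finset.mul_prod_erase Finset.univ _ (Finset.mem_univ k0)]
          rw [if_pos rfl, Finset.card_singleton, one_mul]
          have hprod : ∀ k ∈ Finset.univ.erase k0,
              (if k = k0 then ({0} : Finset ℤ) else Finset.Icc (-B) B).card = Q := by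
            intro k hk
            rw [if_neg (Finset.ne_of_mem_erase hk), Int.card_Icc]
            congr 1
            omega
          rw [Finset.prod_congr rfl hprod, Finset.prod_const]
          congr 1
          rw [Finset.card_erase_of_mem (Finset.mem_univ k0), Finset.card_univ, Fintype.card_fin]
  -- cast to ℝ
  have hcard2 : s.card ≤ n * Q ^ (d - 1) := le_trans hcard1 (Nat.mul_le_mul_left n himg)
  have hm0 : 0 ≤ m := Int.ceil_nonneg (mul_nonneg (by linarith) hd'.le)
  have hB0 : 0 ≤ B := Int.ceil_nonneg hR
  have hnR : (n : ℝ) ≤ 2 * ((b - a) * d) + 3 := by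
    have h0 : ((2 * m + 1 : ℤ).toNat : ℤ) = 2 * m + 1 := Int.toNat_of_nonneg (by omega)
    have h1 : (n : ℝ) = ((2 * m + 1 : ℤ) : ℝ) := by rw [hn]; exact_mod_cast congrArg (fun z : ℤ => (z : ℝ)) h0
    rw [h1]
    push_cast
    have := (Int.ceil_lt_add_one ((b - a) * d)).le
    have hmr : (m : ℝ) ≤ (b - a) * d + 1 := this
    linarith
  have hQR : (Q : ℝ) ≤ 2 * R + 3 := by
    have h0 : ((2 * B + 1 : ℤ).toNat : ℤ) = 2 * B + 1 := Int.toNat_of_nonneg (by omega)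
    have h1 : (Q : ℝ) = ((2 * B + 1 : ℤ) : ℝ) := by rw [hQ]; exact_mod_cast congrArg (fun z : ℤ => (z : ℝ)) h0
    rw [h1]
    push_cast
    have hmr : (B : ℝ) ≤ R + 1 := (Int.ceil_lt_add_one R).le
    linarith
  calc (s.card : ℝ) ≤ ((n * Q ^ (d - 1) : ℕ) : ℝ) := by exact_mod_cast hcard2
    _ = (n : ℝ) * (Q : ℝ) ^ (d - 1) := by push_cast; ring
    _ ≤ (2 * ((b - a) * d) + 3) * (2 * R + 3) ^ (d - 1) := by
        refine mul_le_mul hnR (pow_le_pow_left₀ (by positivity) hQR _) (by positivity) (by linarith)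

lemma nat_pow_bound (L e : ℕ) : ((L:ℝ)+1)^e ≤ 2^e * ((L:ℝ)^e + 1) := by
  rcases Nat.eq_zero_or_pos L with h|h
  · subst h
    simp only [Nat.cast_zero, zero_add, one_pow]
    have h1 : (1:ℝ) ≤ 2^e := one_le_pow₀ (by norm_num)
    have h2 : (1:ℝ) ≤ (0:ℝ)^e + 1 := le_add_of_nonneg_left (pow_nonneg le_rfl e)
    nlinarith
  · have h1 : (1:ℝ) ≤ (L:ℝ) := by exact_mod_cast h
    calc ((L:ℝ)+1)^e ≤ (2*L)^e := pow_le_pow_left₀ (by positivity) (by linarith) e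
      _ = 2^e * (L:ℝ)^e := mul_pow 2 _ e
      _ ≤ 2^e * ((L:ℝ)^e + 1) := by
          have := pow_nonneg (show (0:ℝ) ≤ 2 by norm_num) e
          nlinarith

lemma abs_coord_le {d : ℕ} (i : Fin d → ℤ) (k : Fin d) :
    |(i k : ℝ)| ≤ Real.sqrt (∑ k', ((i k' : ℝ)) ^ 2) := by
  rw [← Real.sqrt_sq_eq_abs]
  exact Real.sqrt_le_sqrt (Finset.single_le_sum (f := fun k' => ((i k' : ℝ))^2)
    (fun _ _ => sq_nonneg _) (Finset.mem_univ k))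

lemma chain_bound {d : ℕ} {f : Config d → Bool} {Δ : Finset (Site d)}
    (hloc : IsLocal f Δ) (hm : Monotonic f) {p : Fin d → ℝ} {V V' : ℝ}
    (hVp : HasVelocity f p V) (hVp' : HasVelocity f (-p) V')
    {rp : ℝ} (hrp : ∀ j ∈ Δ, |edot (embed j) p| ≤ rp)
    {rb : ℝ} (hrb : ∀ j ∈ Δ, ∀ k, |((j k : ℤ) : ℝ)| ≤ rb) (hrb0 : 0 ≤ rb)
    (hδ : 0 ≤ V + V') {ε : ℝ}
    (μ : Measure (Config d)) [IsProbabilityMeasure μ] (hinv : Invariant ε (Df f) μ)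
    {a0 b0 : ℝ} (hw0 : a0 + rp ≤ b0 - rp) :
    ∀ (t : ℕ) (RL : ℝ), 0 ≤ RL →
      μ (ones (Trunc p a0 b0 (RL + t * rb)))
        ≤ μ (ones (Trunc p (a0 - t * V') (b0 + t * V) RL)) := by
  intro t
  induction t with
  | zero => intro RL _; simp
  | succ t ih =>
    intro RL hRL
    have h1 : RL + ((t+1 : ℕ) : ℝ) * rb = (RL + rb) + (t : ℝ) * rb := by push_cast; ring
    have ha : a0 - ((t+1 : ℕ) : ℝ) * V' = (a0 - (t : ℝ) * V') - V' := by push_cast; ring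
    have hb : b0 + ((t+1 : ℕ) : ℝ) * V = (b0 + (t : ℝ) * V) + V := by push_cast; ring
    rw [h1, ha, hb]
    refine le_trans (ih (RL + rb) (by linarith)) ?_
    refine step_bound f hm μ hinv _ _ (trunc_finite p _ _ RL) ?_
    intro i hi
    have hw' : (a0 - (t : ℝ) * V') + rp ≤ (b0 + (t : ℝ) * V) - rp := by
      have h2 : (0:ℝ) ≤ (t:ℝ) * (V + V') := mul_nonneg (Nat.cast_nonneg t) hδ
      nlinarith
    exact trunc_step hloc hVp hVp' hrp hrb hw' RL i hi


set_option maxHeartbeats 2000000 in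
/-- case (b) of the main theorem. -/
theorem stmt1 (d : ℕ) (hd : 1 < d) (f : Config d → Bool) (Δ : Finset (Site d))
    (hf : Standard f Δ)
    (hattr : Attracts (Df f) (fun _ => true))
    (hV : ∃ p : Fin d → ℝ, enorm p = 1 ∧
      ∃ V V' : ℝ, HasVelocity f p V ∧ HasVelocity f (-p) V' ∧ 0 < V + V')
    (ε : ℝ) (hε : 0 < ε) (hε1 : ε ≤ 1) :
    ∃ c : ℝ, 0 < c ∧
      ∀ μ : Measure (Config d), IsProbabilityMeasure μ → Invariant ε (Df f) μ →
        ∀ L : ℕ,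
          ENNReal.ofReal (Real.exp (-(c * ((L : ℝ) ^ (d - 1) + 1)))) ≤
            μ (ones {i : Site d | enormZ i ≤ (L : ℝ)}) := by
  classical
  obtain ⟨hloc, hmono, -⟩ := hf
  obtain ⟨p, hp1, V, V', hVp, hVp', hδ⟩ := hV
  have hd0 : 0 < d := lt_trans one_pos hd
  have hd' : (0:ℝ) < d := by exact_mod_cast hd0
  have hne : V + V' ≠ 0 := ne_of_gt hδ
  have hp2 : ∑ k, p k ^ 2 = 1 := by
    have h0 : 0 ≤ ∑ k, p k ^ 2 := Finset.sum_nonneg fun _ _ => sq_nonneg _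
    have h1 : Real.sqrt (∑ k, p k ^ 2) = 1 := hp1
    nlinarith [Real.sq_sqrt h0]
  set rp : ℝ := ∑ j ∈ Δ, |edot (embed j) p| with hrpdef
  have hrp0 : 0 ≤ rp := Finset.sum_nonneg fun _ _ => abs_nonneg _
  have hrp : ∀ j ∈ Δ, |edot (embed j) p| ≤ rp := fun j hj =>
    Finset.single_le_sum (f := fun j => |edot (embed j) p|) (fun _ _ => abs_nonneg _) hj
  set rb : ℝ := ∑ j ∈ Δ, ∑ k, |((j k : ℤ) : ℝ)| with hrbdef
  have hrb0 : 0 ≤ rb :=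
    Finset.sum_nonneg fun _ _ => Finset.sum_nonneg fun _ _ => abs_nonneg _
  have hrb : ∀ j ∈ Δ, ∀ k, |((j k : ℤ) : ℝ)| ≤ rb := by
    intro j hj k
    refine le_trans (Finset.single_le_sum (f := fun k => |((j k : ℤ) : ℝ)|)
      (fun _ _ => abs_nonneg _) (Finset.mem_univ k)) ?_
    exact Finset.single_le_sum (f := fun j => ∑ k, |((j k : ℤ) : ℝ)|)
      (fun _ _ => Finset.sum_nonneg fun _ _ => abs_nonneg _) hj
  set P : ℝ := ∑ k, |p k| with hPdef
  have hP0 : 0 ≤ P := Finset.sum_nonneg fun _ _ => abs_nonneg _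
  set q : ℝ := P * rb / (V + V') with hqdef
  have hq0 : 0 ≤ q := div_nonneg (mul_nonneg hP0 hrb0) hδ.le
  set C : ℝ := 4 * q + 2 * rb + 5 with hCdef
  have hC0 : 0 ≤ C := by positivity
  set m1 : ℝ := 2 * ((2 * rp) * d) + 3 with hm1def
  have hm10 : 0 ≤ m1 := by positivity
  set K : ℝ := m1 * C ^ (d - 1) * 2 ^ (d - 1) with hKdef
  have hK0 : 0 ≤ K := by positivity
  refine ⟨(K + 1) * (1 + |Real.log ε|), by positivity, ?_⟩
  intro μ hprob hinv L
  haveI := hprob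
  set t : ℕ := ⌈2 * P * (L : ℝ) / (V + V')⌉₊ with htdef
  set s0 : ℝ := (t : ℝ) * (V' - V) / 2 with hs0def
  have hw0 : (s0 - rp) + rp ≤ (s0 + rp) - rp := le_of_eq (by ring)
  have hchain := chain_bound hloc hmono hVp hVp' hrp hrb hrb0 hδ.le μ hinv hw0 t
    (L : ℝ) (Nat.cast_nonneg L)
  have hbase := base_bound f hε1 μ hinv (Trunc p (s0 - rp) (s0 + rp) ((L : ℝ) + t * rb))
    (trunc_finite p (s0 - rp) (s0 + rp) ((L : ℝ) + t * rb))
  have hball : {i : Site d | enormZ i ≤ (L : ℝ)}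
      ⊆ Trunc p ((s0 - rp) - t * V') ((s0 + rp) + t * V) (L : ℝ) := by
    intro i hi
    have hi' : enormZ i ≤ (L : ℝ) := hi
    have hEq : enormZ i = Real.sqrt (∑ k', ((i k' : ℝ)) ^ 2) := rfl
    have hbox : ∀ k, |(i k : ℝ)| ≤ (L : ℝ) := by
      intro k
      refine le_trans (abs_coord_le i k) ?_
      rw [← hEq]; exact hi'
    have hdot : |edot (embed i) p| ≤ (L : ℝ) * P := by
      have h1 : |edot (embed i) p| ≤ ∑ k, |embed i k * p k| :=
        Finset.abs_sum_le_sum_abs _ _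
      have h2 : ∑ k, |embed i k * p k| = ∑ k, |(i k : ℝ)| * |p k| :=
        Finset.sum_congr rfl fun k _ => abs_mul _ _
      have h3 : ∑ k, |(i k : ℝ)| * |p k| ≤ ∑ k, (L : ℝ) * |p k| :=
        Finset.sum_le_sum fun k _ => mul_le_mul_of_nonneg_right (hbox k) (abs_nonneg _)
      have h4 : ∑ k, (L : ℝ) * |p k| = (L : ℝ) * P := by rw [hPdef, ← Finset.mul_sum]
      linarith
    have htP : (L : ℝ) * P ≤ (t : ℝ) * (V + V') / 2 := by
      have hle := Nat.le_ceil (2 * P * (L : ℝ) / (V + V'))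
      have h2 : 2 * P * (L : ℝ) / (V + V') * ((V + V') / 2) = (L : ℝ) * P := by
        field_simp
      calc (L : ℝ) * P = 2 * P * (L : ℝ) / (V + V') * ((V + V') / 2) := h2.symm
        _ ≤ (t : ℝ) * ((V + V') / 2) := by
            exact mul_le_mul_of_nonneg_right hle (by linarith)
        _ = (t : ℝ) * (V + V') / 2 := by ring
    obtain ⟨hdl, hdr⟩ := abs_le.mp hdot
    have hid1 : (s0 - rp) - (t : ℝ) * V' = -((t : ℝ) * (V + V') / 2) - rp := by
      rw [hs0def]; ring
    have hid2 : (s0 + rp) + (t : ℝ) * V = (t : ℝ) * (V + V') / 2 + rp := by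
      rw [hs0def]; ring
    exact ⟨⟨by rw [hid1]; linarith, by rw [hid2]; linarith⟩, hbox⟩
  have hab : s0 - rp ≤ s0 + rp := by linarith
  have hR0 : (0:ℝ) ≤ (L : ℝ) + t * rb :=
    add_nonneg (Nat.cast_nonneg L) (mul_nonneg (Nat.cast_nonneg t) hrb0)
  have hcard := card_trunc_le hd0 hp2 (s0 - rp) (s0 + rp) ((L : ℝ) + t * rb) hab hR0
  set N : ℕ := (trunc_finite p (s0 - rp) (s0 + rp) ((L : ℝ) + t * rb)).toFinset.card
    with hNdef
  have hNfact : (N : ℝ) ≤ m1 * (2 * ((L : ℝ) + t * rb) + 3) ^ (d - 1) := by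
    have hfac : 2 * ((s0 + rp - (s0 - rp)) * (d : ℝ)) + 3 = m1 := by rw [hm1def]; ring
    rw [hfac] at hcard
    exact hcard
  have htle : (t : ℝ) ≤ 2 * P * (L : ℝ) / (V + V') + 1 := by
    have h0 : (0:ℝ) ≤ 2 * P * (L : ℝ) / (V + V') :=
      div_nonneg (by positivity) hδ.le
    have := Nat.ceil_lt_add_one h0
    rw [htdef]
    linarith
  have hQb : 2 * ((L : ℝ) + t * rb) + 3 ≤ C * ((L : ℝ) + 1) := by
    have h1 : (t : ℝ) * rb ≤ (2 * P * (L : ℝ) / (V + V') + 1) * rb :=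
      mul_le_mul_of_nonneg_right htle hrb0
    have h2 : 2 * P * (L : ℝ) / (V + V') * rb = 2 * q * (L : ℝ) := by
      rw [hqdef]; field_simp
    have h1' : (t : ℝ) * rb ≤ 2 * q * (L : ℝ) + rb := by nlinarith [h1, h2]
    have hL0 : (0:ℝ) ≤ (L : ℝ) := Nat.cast_nonneg L
    rw [hCdef]
    nlinarith [mul_nonneg hq0 hL0, mul_nonneg hrb0 hL0]
  have hNK : (N : ℝ) ≤ K * ((L : ℝ) ^ (d - 1) + 1) := by
    have h3 : (2 * ((L : ℝ) + t * rb) + 3) ^ (d - 1) ≤ (C * ((L : ℝ) + 1)) ^ (d - 1) :=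
      pow_le_pow_left₀ (by positivity) hQb _
    have h4 : (C * ((L : ℝ) + 1)) ^ (d - 1) = C ^ (d - 1) * ((L : ℝ) + 1) ^ (d - 1) :=
      mul_pow _ _ _
    have h5 := nat_pow_bound L (d - 1)
    calc (N : ℝ) ≤ m1 * (2 * ((L : ℝ) + t * rb) + 3) ^ (d - 1) := hNfact
      _ ≤ m1 * (C ^ (d - 1) * ((L : ℝ) + 1) ^ (d - 1)) := by
          rw [← h4]; exact mul_le_mul_of_nonneg_left h3 hm10
      _ ≤ m1 * (C ^ (d - 1) * (2 ^ (d - 1) * ((L : ℝ) ^ (d - 1) + 1))) := by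
          exact mul_le_mul_of_nonneg_left
            (mul_le_mul_of_nonneg_left h5 (by positivity)) hm10
      _ = K * ((L : ℝ) ^ (d - 1) + 1) := by rw [hKdef]; ring
  have hfinal : ENNReal.ofReal
      (Real.exp (-((K + 1) * (1 + |Real.log ε|) * ((L : ℝ) ^ (d - 1) + 1))))
      ≤ ENNReal.ofReal ε ^ N := by
    rw [← ENNReal.ofReal_pow hε.le]
    apply ENNReal.ofReal_le_ofReal
    rw [← Real.exp_log (pow_pos hε N), Real.log_pow]
    apply Real.exp_le_exp.mpr
    have hX1 : (1:ℝ) ≤ (L : ℝ) ^ (d - 1) + 1 := le_add_of_nonneg_left (by positivity)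
    have habs : (0:ℝ) ≤ |Real.log ε| := abs_nonneg _
    have h1 : -((N : ℝ) * |Real.log ε|) ≤ (N : ℝ) * Real.log ε := by
      have := mul_le_mul_of_nonneg_left (neg_abs_le (Real.log ε))
        (Nat.cast_nonneg N : (0:ℝ) ≤ (N : ℝ))
      linarith
    have h2 : (N : ℝ) * |Real.log ε|
        ≤ (K + 1) * (1 + |Real.log ε|) * ((L : ℝ) ^ (d - 1) + 1) := by
      have h3 : (N : ℝ) * |Real.log ε| ≤ (K * ((L : ℝ) ^ (d - 1) + 1)) * |Real.log ε| :=
        mul_le_mul_of_nonneg_right hNK habs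
      nlinarith [hX1, habs, hK0, mul_nonneg hK0 habs]
    linarith
  exact le_trans hfinal (le_trans hbase (le_trans hchain
    (measure_mono (ones_antitone hball))))
end CAPaper
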